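/- The set of functions in Lip_0(T) with finite support is dense in Lip_0(T). -/

import Mathlib

/-- An infinite, locally finite rooted tree in which every vertex other than
the root has degree greater than 1, together with the parent map. -/
structure LipTree (V : Type*) where
  root : V
  G : SimpleGraph V
  isTree : G.IsTree
  locFin : ∀ v : V, (G.neighborSet v).Finite
  infinite : Infinite V
  deg_gt : ∀ v : V, v ≠ root → 1 < (G.neighborSet v).ncard
  par : V → V
  par_root : par root = root
  adj_par : ∀ v : V, v ≠ root → G.Adj v (par v)
  dist_par : ∀ v : V, v ≠ root → G.dist (par v) root + 1 = G.dist v root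

namespace LipTree

variable {V : Type*}

/-- `|v|`, the distance from `v` to the root. -/
noncomputable def depth (T : LipTree V) (v : V) : ℕ := T.G.dist v T.root

/-- membership in the Lipschitz space `Lip(T)`. -/
def MemLip (T : LipTree V) (f : V → ℂ) : Prop :=
  ∃ C : ℝ, ∀ v : V, v ≠ T.root → ‖f v - f (T.par v)‖ ≤ C

/-- membership in the little Lipschitz space `Lip₀(T)`. -/
def MemLip0 (T : LipTree V) (f : V → ℂ) : Prop :=
  T.MemLip f ∧ ∀ ε : ℝ, 0 < ε → ∃ N : ℕ, ∀ v : V, v ≠ T.root → N ≤ T.depth v →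
    ‖f v - f (T.par v)‖ < ε

/-- the norm `‖f‖_Lip = max {|f(root)|, sup_{v ≠ root} |f(v) - f(v⁻)|}`. -/
noncomputable def normLip (T : LipTree V) (f : V → ℂ) : ℝ :=
  max ‖f T.root‖
    (sSup {r : ℝ | ∃ v : V, v ≠ T.root ∧ r = ‖f v - f (T.par v)‖})

/-- `φ` is a Lipschitz self-map of the tree. -/
noncomputable def LipschitzSelfMap (T : LipTree V) (φ : V → V) : Prop :=
  ∃ C : ℕ, ∀ v : V, v ≠ T.root → T.G.dist (φ v) (φ (T.par v)) ≤ C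

/-- the Lipschitz number `λ_φ`. -/
noncomputable def lipNum (T : LipTree V) (φ : V → V) : ℝ :=
  sSup {r : ℝ | ∃ v : V, v ≠ T.root ∧ r = (T.G.dist (φ v) (φ (T.par v)) : ℝ)}

/-- the composition operator `C_φ` maps `Lip₀` into itself and is bounded there. -/
def BoundedOnLip0 (T : LipTree V) (φ : V → V) : Prop :=
  (∀ f : V → ℂ, T.MemLip0 f → T.MemLip0 (f ∘ φ)) ∧
  ∃ C : ℝ, ∀ f : V → ℂ, T.MemLip0 f → T.normLip (f ∘ φ) ≤ C * T.normLip f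

/-- `u` belongs to the sector `S_v` determined by `v`. -/
def InSector (T : LipTree V) (v u : V) : Prop := ∃ k : ℕ, T.par^[k] u = v

end LipTree
namespace LipTree

variable {V : Type*} (T : LipTree V)

lemma depth_root : T.depth T.root = 0 := SimpleGraph.dist_self

lemma depth_eq_zero_iff (v : V) : T.depth v = 0 ↔ v = T.root :=
  T.isTree.isConnected.dist_eq_zero_iff

lemma depth_iterate (k : ℕ) (v : V) : T.depth (T.par^[k] v) = T.depth v - k := by
  induction k with
  | zero => simp
  | succ k ih =>
    rw [Function.iterate_succ_apply']
    by_cases h : T.par^[k] v = T.root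
    · rw [h, T.par_root]
      have h0 : T.depth v - k = 0 := by rw [← ih, h]; exact T.depth_root
      have := T.depth_root
      omega
    · have h1 := T.dist_par _ h
      have h2 : T.depth (T.par^[k] v) ≠ 0 := fun hc => h ((T.depth_eq_zero_iff _).mp hc)
      have h3 : T.depth (T.par (T.par^[k] v)) + 1 = T.depth (T.par^[k] v) := h1
      omega

lemma ball_finite (n : ℕ) : {v : V | T.depth v ≤ n}.Finite := by
  induction n with
  | zero =>
    refine (Set.finite_singleton T.root).subset fun v hv => ?_
    simp only [Set.mem_setOf_eq, Nat.le_zero] at hv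
    exact (T.depth_eq_zero_iff v).mp hv
  | succ n ih =>
    refine (ih.union (Set.Finite.biUnion ih fun w _ => T.locFin w)).subset fun v hv => ?_
    simp only [Set.mem_setOf_eq] at hv
    by_cases h : T.depth v ≤ n
    · exact Or.inl h
    · have hvr : v ≠ T.root := by
        intro hc; rw [hc, T.depth_root] at h; omega
      have h1 : T.depth (T.par v) + 1 = T.depth v := T.dist_par v hvr
      refine Or.inr (Set.mem_biUnion (show T.depth (T.par v) ≤ n by omega) ?_)
      exact (T.adj_par v hvr).symm

end LipTree

/-- The set of functions in `Lip₀(T)` with finite support is dense in `Lip₀(T)`. -/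
theorem lip0_finite_support_dense {V : Type*} (T : LipTree V)
    (f : V → ℂ) (hf : T.MemLip0 f) (ε : ℝ) (hε : 0 < ε) :
    ∃ g : V → ℂ, T.MemLip0 g ∧ (Function.support g).Finite ∧ T.normLip (f - g) ≤ ε := by
  obtain ⟨⟨C, hC⟩, hlit⟩ := hf
  obtain ⟨N, hN⟩ := hlit (ε / 2) (by positivity)
  obtain ⟨B, hB⟩ := ((T.ball_finite N).image (fun v => ‖f v‖)).bddAbove
  have hB' : ∀ v : V, T.depth v ≤ N → ‖f v‖ ≤ B := fun v hv =>
    hB ⟨v, hv, rfl⟩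
  have hB0 : (0 : ℝ) ≤ B :=
    le_trans (norm_nonneg _) (hB' T.root (by rw [T.depth_root]; omega))
  obtain ⟨M, hM⟩ := exists_nat_gt (2 * B / ε)
  have hM0 : (0 : ℝ) < (M : ℝ) + 1 := by positivity
  have hBM : B / ((M : ℝ) + 1) < ε / 2 := by
    rw [div_lt_iff₀ hM0]
    rw [div_lt_iff₀ hε] at hM
    nlinarith
  set h : ℕ → ℝ := fun d => max 0 (1 - ((d - N : ℕ) : ℝ) / ((M : ℝ) + 1)) with hh
  set g : V → ℂ := fun v => f (T.par^[T.depth v - N] v) * ((h (T.depth v) : ℝ) : ℂ) with hg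
  -- g agrees with f on the ball of radius N
  have hg_low : ∀ v : V, T.depth v ≤ N → g v = f v := by
    intro v hv
    have h1 : T.depth v - N = 0 := by omega
    simp [hg, hh, h1]
  -- g vanishes beyond radius N + M + 1
  have hg_zero : ∀ v : V, N + (M + 1) < T.depth v → g v = 0 := by
    intro v hv
    have h1 : h (T.depth v) = 0 := by
      rw [hh]
      simp only
      rw [max_eq_left]
      have h2 : (M : ℝ) + 1 < ((T.depth v - N : ℕ) : ℝ) := by
        have : M + 1 < T.depth v - N := by omega
        push_cast
        exact_mod_cast by exact_mod_cast Nat.cast_lt.mpr this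
      rw [sub_nonpos, le_div_iff₀ hM0, one_mul]
      linarith
    rw [hg]; simp only [h1]; simp
  -- key dichotomy for differences of g
  have hgd : ∀ v : V, v ≠ T.root →
      g v - g (T.par v) = f v - f (T.par v) ∨
      (N ≤ T.depth v ∧ ‖g v - g (T.par v)‖ ≤ B / ((M : ℝ) + 1)) := by
    intro v hv
    have hdp : T.depth (T.par v) + 1 = T.depth v := T.dist_par v hv
    by_cases hd : T.depth v ≤ N
    · left
      rw [hg_low v hd, hg_low (T.par v) (by omega)]
    · right
      refine ⟨by omega, ?_⟩
      set d := T.depth v with hdd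
      have hd1 : N < d := by omega
      -- the projected vertex
      set w := T.par^[d - N] v with hw
      have hwp : T.par^[T.depth (T.par v) - N] (T.par v) = w := by
        have he : d - N = (T.depth (T.par v) - N) + 1 := by omega
        rw [hw, he, Function.iterate_succ_apply]
      have hgv : g v = f w * ((h d : ℝ) : ℂ) := by rw [hg]
      have hgpv : g (T.par v) = f w * ((h (d - 1) : ℝ) : ℂ) := by
        rw [hg]; simp only [hwp]
        have hd2 : T.depth (T.par v) = d - 1 := by omega
        rw [hd2]
      have hfw : ‖f w‖ ≤ B := by
        apply hB'
        rw [hw, T.depth_iterate]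
        omega
      have hcast : ((d - N : ℕ) : ℝ) = ((d - 1 - N : ℕ) : ℝ) + 1 := by
        have : d - N = (d - 1 - N) + 1 := by omega
        rw [this]; push_cast; ring
      have hhd : |h d - h (d - 1)| ≤ 1 / ((M : ℝ) + 1) := by
        rw [hh]
        simp only
        rw [max_comm 0 (1 - ((d - N : ℕ) : ℝ) / ((M : ℝ) + 1)),
          max_comm 0 (1 - ((d - 1 - N : ℕ) : ℝ) / ((M : ℝ) + 1))]
        refine le_trans (abs_max_sub_max_le_abs _ _ _) ?_
        rw [hcast]
        rw [show (1 - (((d - 1 - N : ℕ) : ℝ) + 1) / ((M : ℝ) + 1)) -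
            (1 - ((d - 1 - N : ℕ) : ℝ) / ((M : ℝ) + 1)) = -(1 / ((M : ℝ) + 1)) by
          field_simp; ring]
        rw [abs_neg, abs_of_nonneg (by positivity)]
      calc ‖g v - g (T.par v)‖
          = ‖f w‖ * |h d - h (d - 1)| := by
            rw [hgv, hgpv, ← mul_sub, norm_mul]
            congr 1
            rw [← Complex.ofReal_sub, Complex.norm_real, Real.norm_eq_abs]
        _ ≤ B * (1 / ((M : ℝ) + 1)) :=
            mul_le_mul hfw hhd (abs_nonneg _) hB0
        _ = B / ((M : ℝ) + 1) := by ring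
  -- the difference estimate
  have hkey : ∀ v : V, v ≠ T.root →
      ‖(f v - g v) - (f (T.par v) - g (T.par v))‖ ≤ ε := by
    intro v hv
    rcases hgd v hv with heq | ⟨hdep, hbd⟩
    · have : (f v - g v) - (f (T.par v) - g (T.par v)) =
        (f v - f (T.par v)) - (g v - g (T.par v)) := by ring
      rw [this, heq, sub_self, norm_zero]
      exact le_of_lt hε
    · have h1 : ‖f v - f (T.par v)‖ < ε / 2 := hN v hv hdep
      have : (f v - g v) - (f (T.par v) - g (T.par v)) =
        (f v - f (T.par v)) - (g v - g (T.par v)) := by ring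
      rw [this]
      calc ‖(f v - f (T.par v)) - (g v - g (T.par v))‖
          ≤ ‖f v - f (T.par v)‖ + ‖g v - g (T.par v)‖ := by
            have h2 := norm_add_le (f v - f (T.par v)) (-(g v - g (T.par v)))
            rwa [← sub_eq_add_neg, norm_neg] at h2
        _ ≤ ε / 2 + B / ((M : ℝ) + 1) := add_le_add h1.le hbd
        _ ≤ ε := by linarith
  refine ⟨g, ⟨⟨max C (B / ((M : ℝ) + 1)), fun v hv => ?_⟩, fun ε' hε' => ⟨N + M + 3, fun v hv hdep => ?_⟩⟩,
    ?_, ?_⟩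
  · rcases hgd v hv with heq | ⟨_, hbd⟩
    · rw [heq]; exact (hC v hv).trans (le_max_left _ _)
    · exact hbd.trans (le_max_right _ _)
  · have hdp : T.depth (T.par v) + 1 = T.depth v := T.dist_par v hv
    rw [hg_zero v (by omega), hg_zero (T.par v) (by omega), sub_self, norm_zero]
    exact hε'
  · refine (T.ball_finite (N + M + 1)).subset fun v hv => ?_
    simp only [Set.mem_setOf_eq]
    by_contra hc
    exact hv (hg_zero v (by omega))
  · rw [LipTree.normLip]
    apply max_le
    · have : (f - g) T.root = 0 := by
        simp [Pi.sub_apply, hg_low T.root (by rw [T.depth_root]; omega)]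
      rw [this, norm_zero]
      exact hε.le
    · apply Real.sSup_le _ hε.le
      rintro r ⟨v, hv, rfl⟩
      simpa [Pi.sub_apply] using hkey v hv
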